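/- arXiv:2102.09255 — 2 statements merged into one kernel-verified Lean document; each statement's English description precedes it below -/
import Mathlib

section
/- If a deterministic automaton G is nonblocking, then for every event subset Σ' ⊆ Σ the observer (subset-construction) automaton P_{Σ'}(G) is nonblocking, where a state of the observer automaton is marked iff it contains a marked state of G. -/
open scoped Classical

/-- A deterministic partial automaton `G = (A, Σ, δ, a₀, A_m)`. -/
structure DAut (A E : Type*) where
  δ : A → E → Option A
  init : A
  marked : Set A

/-- The transition function extended to words. -/
def DAut.run {A E : Type*} (M : DAut A E) : A → List E → Option A
  | a, [] => some a
  | a, e :: w => (M.δ a e).bind fun a' => M.run a' w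

/-- Natural projection onto the event subset `S`. -/
def natProj {α : Type*} (S : Set α) [DecidablePred (· ∈ S)] (w : List α) : List α :=
  w.filter fun e => decide (e ∈ S)

/-- Initial state of the observer (subset-construction) automaton: the set of
states reachable from `a₀` via words projecting to `ε`. -/
def obsInit {A E : Type*} (M : DAut A E) (S : Set E) [DecidablePred (· ∈ S)] : Set A :=
  {a | ∃ w, natProj S w = [] ∧ M.run M.init w = some a}

/-- From a subset-state `T` and `e ∈ Σ'`, the set of states reachable from `T`
via words projecting to `e`. -/
def obsStep {A E : Type*} (M : DAut A E) (S : Set E) [DecidablePred (· ∈ S)]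
    (T : Set A) (e : E) : Set A :=
  {a | ∃ a' ∈ T, ∃ w, natProj S w = [e] ∧ M.run a' w = some a}

/-- Partial transition function of the observer automaton: defined for `e ∈ Σ'`
when the successor subset-state is nonempty. -/
noncomputable def obsDelta {A E : Type*} (M : DAut A E) (S : Set E) [DecidablePred (· ∈ S)]
    (T : Set A) (e : E) : Option (Set A) :=
  if e ∈ S ∧ (obsStep M S T e).Nonempty then some (obsStep M S T e) else none

/-- The observer transition function extended to words over `Σ'`. -/
noncomputable def obsRun {A E : Type*} (M : DAut A E) (S : Set E) [DecidablePred (· ∈ S)] :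
    Set A → List E → Option (Set A)
  | T, [] => some T
  | T, e :: v => (obsDelta M S T e).bind fun T' => obsRun M S T' v

/-- `G` is nonblocking: from every state reachable from the initial state, some
marked state is reachable. -/
def Nonblocking {A E : Type*} (M : DAut A E) : Prop :=
  ∀ a : A, (∃ w, M.run M.init w = some a) →
    ∃ v am, M.run a v = some am ∧ am ∈ M.marked

section Aux

variable {A E : Type*} (M : DAut A E) (S : Set E) [DecidablePred (· ∈ S)]

lemma run_append (a : A) (u v : List E) :
    M.run a (u ++ v) = (M.run a u).bind fun b => M.run b v := by
  induction u generalizing a with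
  | nil => simp [DAut.run]
  | cons e u ih =>
    simp only [List.cons_append, DAut.run]
    cases M.δ a e with
    | none => simp
    | some a' => simp [ih]

lemma natProj_append (u v : List E) :
    natProj S (u ++ v) = natProj S u ++ natProj S v := by
  simp [natProj]

/-- `b` is reachable from `T` by a silent word. -/
def ObsRel (T : Set A) (b : A) : Prop :=
  ∃ c ∈ T, ∃ u, natProj S u = [] ∧ M.run c u = some b

/-- `T` is closed under silent moves. -/
def ObsClosed (T : Set A) : Prop := ∀ b, ObsRel M S T b → b ∈ T

lemma obsrel_of_mem {T : Set A} {a : A} (ha : a ∈ T) : ObsRel M S T a :=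
  ⟨a, ha, [], rfl, rfl⟩

lemma closed_obsInit : ObsClosed M S (obsInit M S) := by
  rintro b ⟨c, ⟨w, hw, hrun⟩, u, hu, hrunu⟩
  exact ⟨w ++ u, by simp [natProj_append, hw, hu],
    by rw [run_append, hrun]; exact hrunu⟩

lemma closed_obsStep (T : Set A) (e : E) : ObsClosed M S (obsStep M S T e) := by
  rintro b ⟨c, ⟨a', ha', w, hw, hrun⟩, u, hu, hrunu⟩
  exact ⟨a', ha', w ++ u, by simp [natProj_append, hw, hu],
    by rw [run_append, hrun]; exact hrunu⟩

lemma closed_obsRun {T₀ T : Set A} {w : List E} (h : obsRun M S T₀ w = some T)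
    (h₀ : ObsClosed M S T₀) : ObsClosed M S T := by
  induction w generalizing T₀ with
  | nil => simp [obsRun] at h; subst h; exact h₀
  | cons e w ih =>
    simp only [obsRun, obsDelta] at h
    split at h
    · exact ih (by simpa using h) (closed_obsStep M S _ e)
    · simp at h

lemma nonempty_obsRun {T₀ T : Set A} {w : List E} (h : obsRun M S T₀ w = some T)
    (h₀ : T₀.Nonempty) : T.Nonempty := by
  induction w generalizing T₀ with
  | nil => simp [obsRun] at h; subst h; exact h₀
  | cons e w ih =>
    simp only [obsRun, obsDelta] at h
    split at h
    · next hc => exact ih (by simpa using h) hc.2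
    · simp at h

lemma reach_obsRun {T₀ T : Set A} {w : List E} (h : obsRun M S T₀ w = some T)
    (h₀ : ∀ a ∈ T₀, ∃ w', M.run M.init w' = some a) :
    ∀ a ∈ T, ∃ w', M.run M.init w' = some a := by
  induction w generalizing T₀ with
  | nil => simp [obsRun] at h; subst h; exact h₀
  | cons e w ih =>
    simp only [obsRun, obsDelta] at h
    split at h
    · refine ih (by simpa using h) ?_
      rintro a ⟨a', ha', v, hv, hrun⟩
      obtain ⟨w', hw'⟩ := h₀ a' ha'
      exact ⟨w' ++ v, by rw [run_append, hw']; exact hrun⟩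
    · simp at h

lemma run_obsRun {v : List E} {a b : A} {T : Set A}
    (ha : ObsRel M S T a) (hb : M.run a v = some b) :
    ∃ T', obsRun M S T (natProj S v) = some T' ∧ ObsRel M S T' b := by
  induction v generalizing a T with
  | nil =>
    simp only [DAut.run, Option.some.injEq] at hb
    subst hb
    exact ⟨T, rfl, ha⟩
  | cons e v ih =>
    simp only [DAut.run] at hb
    cases hδ : M.δ a e with
    | none => rw [hδ] at hb; simp at hb
    | some a' =>
      rw [hδ] at hb; simp only [Option.bind_some, Option.bind_some] at hb
      obtain ⟨c, hc, u, hu, hru⟩ := ha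
      by_cases he : e ∈ S
      · have hproj : natProj S (e :: v) = e :: natProj S v := by
          simp [natProj, List.filter_cons, he]
        have hstep : a' ∈ obsStep M S T e := by
          refine ⟨c, hc, u ++ [e], by rw [natProj_append, hu]; simp [natProj, he], ?_⟩
          rw [run_append, hru]
          simp [DAut.run, hδ]
        obtain ⟨T', hT', hrel⟩ := ih (obsrel_of_mem M S hstep) hb
        refine ⟨T', ?_, hrel⟩
        rw [hproj]
        have hd : obsDelta M S T e = some (obsStep M S T e) := by
          unfold obsDelta
          rw [if_pos ⟨he, ⟨a', hstep⟩⟩]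
        simp only [obsRun, hd, Option.bind_some]
        exact hT'
      · have hproj : natProj S (e :: v) = natProj S v := by
          simp [natProj, List.filter_cons, he]
        have hrel : ObsRel M S T a' := by
          refine ⟨c, hc, u ++ [e], by rw [natProj_append, hu]; simp [natProj, he], ?_⟩
          rw [run_append, hru]
          simp [DAut.run, hδ]
        obtain ⟨T', hT', hrelb⟩ := ih hrel hb
        exact ⟨T', by rw [hproj]; exact hT', hrelb⟩

end Aux

/-- If a deterministic automaton `G` is nonblocking, then for every event subset
`Σ' ⊆ Σ` the observer automaton `P_{Σ'}(G)` is nonblocking, where a state of the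
observer is marked iff it contains a marked state of `G`. -/
theorem observer_nonblocking {A E : Type*} (M : DAut A E) (S : Set E)
    [DecidablePred (· ∈ S)] (h : Nonblocking M) :
    ∀ T : Set A, (∃ w, obsRun M S (obsInit M S) w = some T) →
      ∃ v T', obsRun M S T v = some T' ∧ (T' ∩ M.marked).Nonempty := by
  rintro T ⟨w, hw⟩
  have hinit_ne : (obsInit M S).Nonempty := ⟨M.init, [], rfl, rfl⟩
  have hinit_reach : ∀ a ∈ obsInit M S, ∃ w', M.run M.init w' = some a := by
    rintro a ⟨u, _, hu⟩; exact ⟨u, hu⟩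
  obtain ⟨a, ha⟩ := nonempty_obsRun M S hw hinit_ne
  obtain ⟨w', hw'⟩ := reach_obsRun M S hw hinit_reach a ha
  obtain ⟨v, am, hv, hm⟩ := h a ⟨w', hw'⟩
  obtain ⟨T', hT', hrel⟩ := run_obsRun M S (obsrel_of_mem M S ha) hv
  have hc : ObsClosed M S T' :=
    closed_obsRun M S hT' (closed_obsRun M S hw (closed_obsInit M S))
  exact ⟨natProj S v, T', hT', am, hc am hrel, hm⟩
end

section
/- Under the assumption L(NS) ⊆ P_{Σ_NS}(L(NP)), the networked supervised plant equals the synchronous product of the supervisor and the networked plant: L(NS ∥_{N_c,N_o} G) = L(NS ∥ NP), where ∥ denotes ordinary synchronous composition on the shared alphabet Σ_NS ⊆ Σ_NSP. -/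
namespace NSC

/-- Events of the networked closed loop: enabling events `σ_e`, plant (active)
events `σ ∈ Σ_a`, observed events `σ_o`, and the clock event `tick`.
The plant alphabet `Σ_G` consists of the active events and `tick`; the
supervisor alphabet `Σ_NS` consists of enabling events, observed events and
`tick`, so that `Σ_NS ∩ Σ_G = {tick}`. -/
inductive Ev (E : Type) : Type
  | enable : E → Ev E
  | act : E → Ev E
  | obsv : E → Ev E
  | tick : Ev E

/-- A plant TDES `G = (A, Σ_G, δ_G, a₀, A_m)`: partial transitions on active
events and on `tick`. -/
structure Plant (A E : Type) where
  δa : A → E → Option A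
  δt : A → Option A
  init : A
  marked : Set A

/-- A networked supervisor `NS = (Y, Σ_NS, δ_NS, y₀, Y_m)`: partial transitions
on enabling events, observed events and `tick`. -/
structure Sup (Y E : Type) where
  δe : Y → E → Option Y
  δo : Y → E → Option Y
  δt : Y → Option Y
  init : Y
  marked : Set Y

variable {A Y E : Type}

/-- `δ_G` extended to words over the full alphabet (undefined off `Σ_G`). -/
def Plant.run (G : Plant A E) : A → List (Ev E) → Option A
  | a, [] => some a
  | a, Ev.act σ :: w => (G.δa a σ).bind fun a' => G.run a' w
  | a, Ev.tick :: w => (G.δt a).bind fun a' => G.run a' w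
  | _, Ev.enable _ :: _ => none
  | _, Ev.obsv _ :: _ => none

/-- `δ_NS` extended to words over the full alphabet (undefined off `Σ_NS`). -/
def Sup.run (NS : Sup Y E) : Y → List (Ev E) → Option Y
  | y, [] => some y
  | y, Ev.enable σ :: w => (NS.δe y σ).bind fun y' => NS.run y' w
  | y, Ev.obsv σ :: w => (NS.δo y σ).bind fun y' => NS.run y' w
  | y, Ev.tick :: w => (NS.δt y).bind fun y' => NS.run y' w
  | _, Ev.act _ :: _ => none

/-- Membership in the plant alphabet `Σ_G = Σ_a ∪ {tick}`. -/
def Ev.isG : Ev E → Bool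
  | Ev.act _ => true
  | Ev.tick => true
  | _ => false

/-- Membership in the supervisor alphabet `Σ_NS = Σ_e ∪ Σ_o ∪ {tick}`. -/
def Ev.isNS : Ev E → Bool
  | Ev.act _ => false
  | _ => true

/-- Natural projection `P_{Σ_G}`. -/
def projG (w : List (Ev E)) : List (Ev E) := w.filter Ev.isG

/-- Natural projection `P_{Σ_NS}`. -/
def projNS (w : List (Ev E)) : List (Ev E) := w.filter Ev.isNS

/-- `app(l,(σ,n))`: append to the FIFO control channel if not full. -/
def chanApp (Lmax : ℕ) (l : List (E × ℕ)) (p : E × ℕ) : List (E × ℕ) :=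
  if l.length < Lmax then l ++ [p] else l

/-- `m ⊎ [(σ,n)]`: insert into the observation channel if not full. -/
def chanIns (Mmax : ℕ) (m : Multiset (E × ℕ)) (p : E × ℕ) : Multiset (E × ℕ) :=
  if Multiset.card m < Mmax then p ::ₘ m else m

/-- `l − 1`: decrement all control-channel counters, dropping expired entries. -/
def chanDecL (l : List (E × ℕ)) : List (E × ℕ) :=
  (l.filter fun p => p.2 != 0).map fun p => (p.1, p.2 - 1)

/-- `m − 1`: decrement all observation-channel counters, dropping expired
entries. -/
def chanDecM (m : Multiset (E × ℕ)) : Multiset (E × ℕ) :=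
  (m.filter fun p => p.2 ≠ 0).map fun p => (p.1, p.2 - 1)

variable [DecidableEq E]

/-- One transition of the networked supervised plant
`NSP = NS ‖_{N_c,N_o} G` (Definition of the timed asynchronous composition):
states are tuples `(a, y, m, l)`. -/
inductive NSPstep (G : Plant A E) (NS : Sup Y E) (Sc Suc : Set E)
    (Nc No Lmax Mmax : ℕ) :
    A × Y × Multiset (E × ℕ) × List (E × ℕ) → Ev E →
      A × Y × Multiset (E × ℕ) × List (E × ℕ) → Prop
  | enable {a : A} {y : Y} {m : Multiset (E × ℕ)} {l : List (E × ℕ)} {y' : Y}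
      (σ : E) (h : NS.δe y σ = some y') :
      NSPstep G NS Sc Suc Nc No Lmax Mmax (a, y, m, l) (Ev.enable σ)
        (a, y', m, chanApp Lmax l (σ, Nc))
  | ctrl {a : A} {y : Y} {m : Multiset (E × ℕ)} {l : List (E × ℕ)} {a' : A}
      (σ : E) (hσ : σ ∈ Sc) (h : G.δa a σ = some a')
      (hl : l.head? = some (σ, 0)) :
      NSPstep G NS Sc Suc Nc No Lmax Mmax (a, y, m, l) (Ev.act σ)
        (a', y, chanIns Mmax m (σ, No), l.tail)
  | unctrl {a : A} {y : Y} {m : Multiset (E × ℕ)} {l : List (E × ℕ)} {a' : A}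
      (σ : E) (hσ : σ ∈ Suc) (h : G.δa a σ = some a') :
      NSPstep G NS Sc Suc Nc No Lmax Mmax (a, y, m, l) (Ev.act σ)
        (a', y, chanIns Mmax m (σ, No), l)
  | tick {a : A} {y : Y} {m : Multiset (E × ℕ)} {l : List (E × ℕ)} {a' : A}
      {y' : Y} (hG : G.δt a = some a') (hNS : NS.δt y = some y')
      (hm : ∀ σ : E, (σ, 0) ∉ m) :
      NSPstep G NS Sc Suc Nc No Lmax Mmax (a, y, m, l) Ev.tick
        (a', y', chanDecM m, chanDecL l)
  | observe {a : A} {y : Y} {m : Multiset (E × ℕ)} {l : List (E × ℕ)} {y' : Y}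
      (σ : E) (h : NS.δo y σ = some y') (hm : (σ, 0) ∈ m) :
      NSPstep G NS Sc Suc Nc No Lmax Mmax (a, y, m, l) (Ev.obsv σ)
        (a, y', m.erase (σ, 0), l)

/-- Labelled paths of a labelled transition relation. -/
inductive Path {S L : Type} (step : S → L → S → Prop) : S → List L → S → Prop
  | nil (s : S) : Path step s [] s
  | cons {s s' s'' : S} {e : L} {w : List L} :
      step s e s' → Path step s' w s'' → Path step s (e :: w) s''

/-- Initial state of `NSP`: both channels are empty. -/
def nspInit (G : Plant A E) (NS : Sup Y E) :
    A × Y × Multiset (E × ℕ) × List (E × ℕ) :=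
  (G.init, NS.init, 0, [])

end NSC

namespace NSC

variable {A Y E : Type}

/-- Projection onto `Σ_G ∖ Σ_uc` (controllable active events and `tick`),
used to build `G' = P_{Σ_G∖Σ_uc}(G)`. -/
def projCT (Sc : Set E) [DecidablePred (· ∈ Sc)] (w : List (Ev E)) : List (Ev E) :=
  w.filter fun e =>
    match e with
    | Ev.act σ => decide (σ ∈ Sc)
    | Ev.tick => true
    | _ => false

/-- Subset-construction transition of the determinized projection `G'`: from a
subset-state `S` and an event `e` (a controllable active event or `tick`), the
set of states reachable via words of `G` projecting to `e`.  The transition is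
"defined" iff this set is nonempty. -/
def detStep (G : Plant A E) (Sc : Set E) [DecidablePred (· ∈ Sc)]
    (S : Set A) (e : Ev E) : Set A :=
  {a' | ∃ a ∈ S, ∃ w, projCT Sc w = [e] ∧ G.run a w = some a'}

/-- Initial subset-state of `G'`. -/
def detInit (G : Plant A E) (Sc : Set E) [DecidablePred (· ∈ Sc)] : Set A :=
  {a' | ∃ w, projCT Sc w = [] ∧ G.run G.init w = some a'}

/-- Iterated `tick` transitions of `G'` (for the `N_c`-tick lookahead). -/
def tickIter (G : Plant A E) (Sc : Set E) [DecidablePred (· ∈ Sc)] :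
    ℕ → Set A → Set A
  | 0, S => S
  | n + 1, S => tickIter G Sc n (detStep G Sc S Ev.tick)

variable [DecidableEq E]

/-- One transition of the networked plant `NP = Π(G, N_c, N_o, L_max, M_max)`:
states are tuples `(a, a', m, l)` of a plant state, a lookahead subset-state of
`G'`, the observation channel and the control channel. -/
inductive NPstep (G : Plant A E) (Sc Suc : Set E) [DecidablePred (· ∈ Sc)]
    (Nc No Lmax Mmax : ℕ) :
    A × Set A × Multiset (E × ℕ) × List (E × ℕ) → Ev E →
      A × Set A × Multiset (E × ℕ) × List (E × ℕ) → Prop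
  | enable {a : A} {S : Set A} {m : Multiset (E × ℕ)} {l : List (E × ℕ)}
      (σ : E) (hσ : σ ∈ Sc) (hne : (detStep G Sc S (Ev.act σ)).Nonempty) :
      NPstep G Sc Suc Nc No Lmax Mmax (a, S, m, l) (Ev.enable σ)
        (a, detStep G Sc S (Ev.act σ), m, chanApp Lmax l (σ, Nc))
  | ctrl {a : A} {S : Set A} {m : Multiset (E × ℕ)} {l : List (E × ℕ)} {a' : A}
      (σ : E) (hσ : σ ∈ Sc) (h : G.δa a σ = some a')
      (hl : l.head? = some (σ, 0)) :
      NPstep G Sc Suc Nc No Lmax Mmax (a, S, m, l) (Ev.act σ)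
        (a', S, chanIns Mmax m (σ, No), l.tail)
  | unctrl {a : A} {S : Set A} {m : Multiset (E × ℕ)} {l : List (E × ℕ)} {a' : A}
      (σ : E) (hσ : σ ∈ Suc) (h : G.δa a σ = some a') :
      NPstep G Sc Suc Nc No Lmax Mmax (a, S, m, l) (Ev.act σ)
        (a', S, chanIns Mmax m (σ, No), l)
  | tickDef {a : A} {S : Set A} {m : Multiset (E × ℕ)} {l : List (E × ℕ)}
      {a1 : A} (hG : G.δt a = some a1)
      (hc : ∀ σ ∈ Sc, ¬(detStep G Sc S (Ev.act σ)).Nonempty)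
      (hm : ∀ σ : E, (σ, 0) ∉ m)
      (hne : (detStep G Sc S Ev.tick).Nonempty) :
      NPstep G Sc Suc Nc No Lmax Mmax (a, S, m, l) Ev.tick
        (a1, detStep G Sc S Ev.tick, chanDecM m, chanDecL l)
  | tickUndef {a : A} {S : Set A} {m : Multiset (E × ℕ)} {l : List (E × ℕ)}
      {a1 : A} (hG : G.δt a = some a1)
      (hc : ∀ σ ∈ Sc, ¬(detStep G Sc S (Ev.act σ)).Nonempty)
      (hm : ∀ σ : E, (σ, 0) ∉ m)
      (hne : ¬(detStep G Sc S Ev.tick).Nonempty) :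
      NPstep G Sc Suc Nc No Lmax Mmax (a, S, m, l) Ev.tick
        (a1, S, chanDecM m, chanDecL l)
  | observe {a : A} {S : Set A} {m : Multiset (E × ℕ)} {l : List (E × ℕ)}
      (σ : E) (hm : (σ, 0) ∈ m) :
      NPstep G Sc Suc Nc No Lmax Mmax (a, S, m, l) (Ev.obsv σ)
        (a, S, m.erase (σ, 0), l)

/-- Initial state of `NP`: the lookahead component is `δ'_G(a'₀, tick^{N_c})`
and both channels are empty. -/
def npInit (G : Plant A E) (Sc : Set E) [DecidablePred (· ∈ Sc)] (Nc : ℕ) :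
    A × Set A × Multiset (E × ℕ) × List (E × ℕ) :=
  (G.init, tickIter G Sc Nc (detInit G Sc), 0, [])

end NSC

namespace NSC

section Aux

variable {A Y E : Type}

theorem Sup.run_append (NS : Sup Y E) :
    ∀ (u v : List (Ev E)) (y : Y),
      NS.run y (u ++ v) = (NS.run y u).bind fun y' => NS.run y' v := by
  intro u
  induction u with
  | nil => intro v y; simp [Sup.run]
  | cons e u ih =>
    intro v y
    cases e with
    | enable σ => cases h : NS.δe y σ <;> simp [Sup.run, h, ih]
    | obsv σ => cases h : NS.δo y σ <;> simp [Sup.run, h, ih]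
    | tick => cases h : NS.δt y <;> simp [Sup.run, h, ih]
    | act σ => simp [Sup.run]

@[simp] theorem projNS_nil : projNS ([] : List (Ev E)) = [] := rfl

@[simp] theorem projNS_cons_enable (σ : E) (w : List (Ev E)) :
    projNS (Ev.enable σ :: w) = Ev.enable σ :: projNS w := rfl

@[simp] theorem projNS_cons_obsv (σ : E) (w : List (Ev E)) :
    projNS (Ev.obsv σ :: w) = Ev.obsv σ :: projNS w := rfl

@[simp] theorem projNS_cons_tick (w : List (Ev E)) :
    projNS (Ev.tick :: w) = Ev.tick :: projNS w := rfl

@[simp] theorem projNS_cons_act (σ : E) (w : List (Ev E)) :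
    projNS (Ev.act σ :: w) = projNS w := rfl

open Classical in
noncomputable def supdate (G : Plant A E) (Sc : Set E) [DecidablePred (· ∈ Sc)]
    (S : Set A) : Ev E → Set A
  | Ev.enable σ => detStep G Sc S (Ev.act σ)
  | Ev.tick => if (detStep G Sc S Ev.tick).Nonempty then detStep G Sc S Ev.tick else S
  | _ => S

variable [DecidableEq E] {G : Plant A E} {NS : Sup Y E} {Sc Suc : Set E}
  [DecidablePred (· ∈ Sc)] {Nc No Lmax Mmax : ℕ}

theorem nsp_run {s z : A × Y × Multiset (E × ℕ) × List (E × ℕ)}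
    {w : List (Ev E)}
    (h : Path (NSPstep G NS Sc Suc Nc No Lmax Mmax) s w z) :
    NS.run s.2.1 (projNS w) = some z.2.1 := by
  induction h with
  | nil => simp [Sup.run]
  | cons st rest ih =>
    cases st <;> simp_all [Sup.run, projNS, Ev.isNS, List.filter_cons]

theorem np_extract {s x : A × Set A × Multiset (E × ℕ) × List (E × ℕ)}
    {w : List (Ev E)}
    (h : Path (NPstep G Sc Suc Nc No Lmax Mmax) s w x) :
    ∀ (p : List (Ev E)) (e : Ev E) (q : List (Ev E)), projNS w = p ++ e :: q →
      ∃ s1 s2, NPstep G Sc Suc Nc No Lmax Mmax s1 e s2 ∧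
        s1.2.1 = List.foldl (supdate G Sc) s.2.1 p := by
  induction h with
  | nil => intro p e q hp; simp at hp
  | cons st rest ih =>
    intro p e q hp
    cases st with
    | ctrl σ hσ hδ hl =>
      simp only [projNS_cons_act] at hp
      exact ih p e q hp
    | unctrl σ hσ hδ =>
      simp only [projNS_cons_act] at hp
      exact ih p e q hp
    | @enable a S m l σ hσ hne =>
      simp only [projNS_cons_enable] at hp
      cases p with
      | nil =>
        simp only [List.nil_append, List.cons.injEq] at hp
        exact ⟨_, _, hp.1 ▸ NPstep.enable σ hσ hne, rfl⟩
      | cons p0 p' =>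
        simp only [List.cons_append, List.cons.injEq] at hp
        obtain ⟨rfl, hp⟩ := hp
        obtain ⟨s1, s2, st1, hS⟩ := ih p' e q hp
        exact ⟨s1, s2, st1, by simpa [supdate] using hS⟩
    | @tickDef a S m l a1 hG hc hm hne =>
      simp only [projNS_cons_tick] at hp
      cases p with
      | nil =>
        simp only [List.nil_append, List.cons.injEq] at hp
        exact ⟨_, _, hp.1 ▸ NPstep.tickDef hG hc hm hne, rfl⟩
      | cons p0 p' =>
        simp only [List.cons_append, List.cons.injEq] at hp
        obtain ⟨rfl, hp⟩ := hp
        obtain ⟨s1, s2, st1, hS⟩ := ih p' e q hp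
        refine ⟨s1, s2, st1, ?_⟩
        simpa [supdate, if_pos hne] using hS
    | @tickUndef a S m l a1 hG hc hm hne =>
      simp only [projNS_cons_tick] at hp
      cases p with
      | nil =>
        simp only [List.nil_append, List.cons.injEq] at hp
        exact ⟨_, _, hp.1 ▸ NPstep.tickUndef hG hc hm hne, rfl⟩
      | cons p0 p' =>
        simp only [List.cons_append, List.cons.injEq] at hp
        obtain ⟨rfl, hp⟩ := hp
        obtain ⟨s1, s2, st1, hS⟩ := ih p' e q hp
        refine ⟨s1, s2, st1, ?_⟩
        simpa [supdate, if_neg hne] using hS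
    | @observe a S m l σ hm =>
      simp only [projNS_cons_obsv] at hp
      cases p with
      | nil =>
        simp only [List.nil_append, List.cons.injEq] at hp
        exact ⟨_, _, hp.1 ▸ NPstep.observe σ hm, rfl⟩
      | cons p0 p' =>
        simp only [List.cons_append, List.cons.injEq] at hp
        obtain ⟨rfl, hp⟩ := hp
        obtain ⟨s1, s2, st1, hS⟩ := ih p' e q hp
        exact ⟨s1, s2, st1, by simpa [supdate] using hS⟩

theorem fwd_aux {NS : Sup Y E}
    (hsub : ∀ v : List (Ev E), (NS.run NS.init v).isSome →
      ∃ w : List (Ev E),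
        (∃ x, Path (NPstep G Sc Suc Nc No Lmax Mmax) (npInit G Sc Nc) w x) ∧
          projNS w = v)
    {w : List (Ev E)} {s z : A × Y × Multiset (E × ℕ) × List (E × ℕ)}
    (h : Path (NSPstep G NS Sc Suc Nc No Lmax Mmax) s w z) :
    ∀ p : List (Ev E), NS.run NS.init p = some s.2.1 →
      ∃ x, Path (NPstep G Sc Suc Nc No Lmax Mmax)
        (s.1, List.foldl (supdate G Sc) (npInit G Sc Nc).2.1 p, s.2.2) w x := by
  induction h with
  | nil => exact fun p _ => ⟨_, Path.nil _⟩
  | cons st rest ih =>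
    intro p hp
    cases st with
    | @enable a y m l y' σ hδ =>
      have hrun : NS.run NS.init (p ++ [Ev.enable σ]) = some y' := by
        rw [Sup.run_append, hp]; simp [Sup.run, hδ]
      obtain ⟨u, ⟨xu, pu⟩, hproju⟩ := hsub (p ++ [Ev.enable σ]) (by simp [hrun])
      obtain ⟨s1, s2, st1, hS⟩ := np_extract pu p (Ev.enable σ) [] hproju
      cases st1 with
      | @enable a2 S2 m2 l2 σ2 hσ hne =>
        have hS' : S2 = List.foldl (supdate G Sc) (npInit G Sc Nc).2.1 p := hS
        rw [hS'] at hne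
        obtain ⟨x, hx⟩ := ih (p ++ [Ev.enable σ]) hrun
        refine ⟨x, Path.cons (NPstep.enable σ hσ hne) ?_⟩
        simpa [supdate] using hx
    | @ctrl a y m l a' σ hσ hδ hl =>
      obtain ⟨x, hx⟩ := ih p hp
      exact ⟨x, Path.cons (NPstep.ctrl σ hσ hδ hl) hx⟩
    | @unctrl a y m l a' σ hσ hδ =>
      obtain ⟨x, hx⟩ := ih p hp
      exact ⟨x, Path.cons (NPstep.unctrl σ hσ hδ) hx⟩
    | @tick a y m l a' y' hG hNS hm =>
      have hrun : NS.run NS.init (p ++ [Ev.tick]) = some y' := by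
        rw [Sup.run_append, hp]; simp [Sup.run, hNS]
      obtain ⟨u, ⟨xu, pu⟩, hproju⟩ := hsub (p ++ [Ev.tick]) (by simp [hrun])
      obtain ⟨s1, s2, st1, hS⟩ := np_extract pu p Ev.tick [] hproju
      have hc : ∀ σ ∈ Sc,
          ¬(detStep G Sc (List.foldl (supdate G Sc) (npInit G Sc Nc).2.1 p)
            (Ev.act σ)).Nonempty := by
        cases st1 with
        | @tickDef a2 S2 m2 l2 a3 hG' hc' hm' hne' =>
          have hS' : S2 = List.foldl (supdate G Sc) (npInit G Sc Nc).2.1 p := hS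
          rw [hS'] at hc'; exact hc'
        | @tickUndef a2 S2 m2 l2 a3 hG' hc' hm' hne' =>
          have hS' : S2 = List.foldl (supdate G Sc) (npInit G Sc Nc).2.1 p := hS
          rw [hS'] at hc'; exact hc'
      obtain ⟨x, hx⟩ := ih (p ++ [Ev.tick]) hrun
      by_cases hne : (detStep G Sc
          (List.foldl (supdate G Sc) (npInit G Sc Nc).2.1 p) Ev.tick).Nonempty
      · refine ⟨x, Path.cons (NPstep.tickDef hG hc hm hne) ?_⟩
        simpa [supdate, if_pos hne] using hx
      · refine ⟨x, Path.cons (NPstep.tickUndef hG hc hm hne) ?_⟩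
        simpa [supdate, if_neg hne] using hx
    | @observe a y m l y' σ hδ hmem =>
      have hrun : NS.run NS.init (p ++ [Ev.obsv σ]) = some y' := by
        rw [Sup.run_append, hp]; simp [Sup.run, hδ]
      obtain ⟨x, hx⟩ := ih (p ++ [Ev.obsv σ]) hrun
      refine ⟨x, Path.cons (NPstep.observe σ hmem) ?_⟩
      simpa [supdate] using hx

theorem bwd_aux {NS : Sup Y E}
    {w : List (Ev E)} {t x : A × Set A × Multiset (E × ℕ) × List (E × ℕ)}
    (h : Path (NPstep G Sc Suc Nc No Lmax Mmax) t w x) :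
    ∀ y : Y, (NS.run y (projNS w)).isSome →
      ∃ z, Path (NSPstep G NS Sc Suc Nc No Lmax Mmax) (t.1, y, t.2.2) w z := by
  induction h with
  | nil => exact fun y _ => ⟨_, Path.nil _⟩
  | cons st rest ih =>
    intro y hy
    cases st with
    | @enable a S m l σ hσ hne =>
      simp only [projNS_cons_enable, Sup.run] at hy
      cases hδ : NS.δe y σ with
      | none => rw [hδ] at hy; simp at hy
      | some y' =>
        rw [hδ] at hy; simp only [Option.bind_some] at hy
        obtain ⟨z, hz⟩ := ih y' hy
        exact ⟨z, Path.cons (NSPstep.enable σ hδ) hz⟩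
    | @ctrl a S m l a' σ hσ hδ hl =>
      simp only [projNS_cons_act] at hy
      obtain ⟨z, hz⟩ := ih y hy
      exact ⟨z, Path.cons (NSPstep.ctrl σ hσ hδ hl) hz⟩
    | @unctrl a S m l a' σ hσ hδ =>
      simp only [projNS_cons_act] at hy
      obtain ⟨z, hz⟩ := ih y hy
      exact ⟨z, Path.cons (NSPstep.unctrl σ hσ hδ) hz⟩
    | @tickDef a S m l a1 hG hc hm hne =>
      simp only [projNS_cons_tick, Sup.run] at hy
      cases hδ : NS.δt y with
      | none => rw [hδ] at hy; simp at hy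
      | some y' =>
        rw [hδ] at hy; simp only [Option.bind_some] at hy
        obtain ⟨z, hz⟩ := ih y' hy
        exact ⟨z, Path.cons (NSPstep.tick hG hδ hm) hz⟩
    | @tickUndef a S m l a1 hG hc hm hne =>
      simp only [projNS_cons_tick, Sup.run] at hy
      cases hδ : NS.δt y with
      | none => rw [hδ] at hy; simp at hy
      | some y' =>
        rw [hδ] at hy; simp only [Option.bind_some] at hy
        obtain ⟨z, hz⟩ := ih y' hy
        exact ⟨z, Path.cons (NSPstep.tick hG hδ hm) hz⟩
    | @observe a S m l σ hmem =>
      simp only [projNS_cons_obsv, Sup.run] at hy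
      cases hδ : NS.δo y σ with
      | none => rw [hδ] at hy; simp at hy
      | some y' =>
        rw [hδ] at hy; simp only [Option.bind_some] at hy
        obtain ⟨z, hz⟩ := ih y' hy
        exact ⟨z, Path.cons (NSPstep.observe σ hδ hmem) hz⟩

end Aux



/-- Under the assumption `L(NS) ⊆ P_{Σ_NS}(L(NP))`, the networked supervised
plant equals the synchronous product of the supervisor and the networked plant:
`L(NS ‖_{N_c,N_o} G) = L(NS ‖ NP)`.  Since `Σ_NS ⊆ Σ_NSP`, the language of the
synchronous product `NS ‖ NP` is `{w ∈ L(NP) | P_{Σ_NS}(w) ∈ L(NS)}`. -/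

theorem nsp_eq_sync_product {A Y E : Type} [DecidableEq E]
    (G : Plant A E) (NS : Sup Y E) (Sc Suc : Set E) [DecidablePred (· ∈ Sc)]
    (Nc No Lmax Mmax : ℕ)
    (hsub : ∀ v : List (Ev E), (NS.run NS.init v).isSome →
      ∃ w : List (Ev E),
        (∃ x, Path (NPstep G Sc Suc Nc No Lmax Mmax) (npInit G Sc Nc) w x) ∧
          projNS w = v) :
    ∀ w : List (Ev E),
      (∃ z, Path (NSPstep G NS Sc Suc Nc No Lmax Mmax) (nspInit G NS) w z) ↔
        ((∃ x, Path (NPstep G Sc Suc Nc No Lmax Mmax) (npInit G Sc Nc) w x) ∧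
          (NS.run NS.init (projNS w)).isSome) := by
  intro w
  constructor
  · rintro ⟨z, hz⟩
    have hrun := nsp_run hz
    refine ⟨?_, ?_⟩
    · have := fwd_aux hsub hz [] (by simp [Sup.run, nspInit])
      simpa [nspInit, npInit] using this
    · simp only [nspInit] at hrun
      rw [hrun]; rfl
  · rintro ⟨⟨x, hx⟩, hrun⟩
    have := bwd_aux hx NS.init hrun
    simpa [nspInit, npInit] using this

end NSC
end
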